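/- Suppose a ≠ 0 and a²/4 < b < 10a²/9. Then there exist two real roots x₁, x₂ of A with 0 < |x₁| < |x₂| and with x₁ and x₂ both of opposite sign to a (that is, x₂ < x₁ < 0 if a > 0, and 0 < x₁ < x₂ if a < 0), and A(x) ≥ 0 for every x in the closed interval with endpoints x₁ and 0. -/
import Mathlib


/-- The polynomial `A(x)`. -/
def Apoly (a b x : ℝ) : ℝ :=
  10 * a ^ 2 - 9 * b + a * (30 * b + 4 * a ^ 2) * x + b * (36 * b + 16 * a ^ 2) * x ^ 2
    + 24 * a * b ^ 2 * x ^ 3 + 9 * b ^ 3 * x ^ 4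

lemma Apoly_neg (a b x : ℝ) : Apoly (-a) b (-x) = Apoly a b x := by
  unfold Apoly; ring

lemma Apoly_cont (a b : ℝ) : Continuous (fun x => Apoly a b x) := by
  unfold Apoly; fun_prop

lemma Apoly_main (a b : ℝ) (ha : 0 < a) (hb1 : a ^ 2 / 4 < b) (hb2 : b < 10 * a ^ 2 / 9) :
    ∃ x₁ x₂ : ℝ, Apoly a b x₁ = 0 ∧ Apoly a b x₂ = 0 ∧ x₂ < x₁ ∧ x₁ < 0 ∧
      ∀ x ∈ Set.Icc x₁ 0, 0 ≤ Apoly a b x := by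
  have ha2 : 0 < a ^ 2 := by positivity
  have hb : 0 < b := by linarith
  set g : ℝ → ℝ := fun x => Apoly a b x with hgdef
  have hg : Continuous g := Apoly_cont a b
  have h0 : 0 < g 0 := by
    show 0 < Apoly a b 0
    unfold Apoly; nlinarith
  set m : ℝ := -a / (2 * b) with hmdef
  have hm0 : m < 0 := by
    apply div_neg_of_neg_of_pos <;> linarith
  have hmval : g m = -((4 * b - a ^ 2) * (36 * b - 7 * a ^ 2)) / (16 * b) := by
    show Apoly a b (-a / (2 * b)) = _
    unfold Apoly
    field_simp
    ring
  have hm : g m < 0 := by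
    rw [hmval]
    apply div_neg_of_neg_of_pos
    · nlinarith
    · linarith
  set L : ℝ := -2 * a / b with hLdef
  have hLm : L < m := by
    rw [hLdef, hmdef, div_lt_div_iff₀ (by linarith) (by linarith)]
    nlinarith
  have hLval : g L = (8 * a ^ 4 + 94 * a ^ 2 * b - 9 * b ^ 2) / b := by
    show Apoly a b (-2 * a / b) = _
    unfold Apoly
    field_simp
    ring
  have hL : 0 < g L := by
    rw [hLval]
    apply div_pos
    · nlinarith
    · exact hb
  -- the set of zeros in [m, 0]
  set T : Set ℝ := Set.Icc m 0 ∩ g ⁻¹' {0} with hTdef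
  have hTcomp : IsCompact T := (isCompact_Icc).inter_right (isClosed_singleton.preimage hg)
  have hTne : T.Nonempty := by
    have hsub := intermediate_value_Icc (le_of_lt hm0) hg.continuousOn
    have : (0 : ℝ) ∈ Set.Icc (g m) (g 0) := ⟨le_of_lt hm, le_of_lt h0⟩
    obtain ⟨x, hx, hgx⟩ := hsub this
    exact ⟨x, hx, hgx⟩
  obtain ⟨⟨hx1m, hx1le0⟩, hx1root⟩ := hTcomp.sSup_mem hTne
  set x₁ : ℝ := sSup T with hx1def
  have hx1root' : g x₁ = 0 := hx1root
  have hx1neg : x₁ < 0 := by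
    rcases lt_or_eq_of_le hx1le0 with h | h
    · exact h
    · exfalso; rw [h] at hx1root'; linarith
  -- x₂ : a root in [L, m]
  have hsub2 := intermediate_value_Icc' (le_of_lt hLm) hg.continuousOn
  have h02 : (0 : ℝ) ∈ Set.Icc (g m) (g L) := ⟨le_of_lt hm, le_of_lt hL⟩
  obtain ⟨x₂, ⟨hx2L, hx2m⟩, hx2root⟩ := hsub2 h02
  have hmx1 : m < x₁ := by
    rcases lt_or_eq_of_le hx1m with h | h
    · exact h
    · exfalso; rw [← h] at hx1root'; linarith
  refine ⟨x₁, x₂, hx1root', hx2root, lt_of_le_of_lt hx2m hmx1, hx1neg, ?_⟩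
  intro x ⟨hxl, hxr⟩
  by_contra hneg
  push_neg at hneg
  have hxx1 : x₁ < x := by
    rcases lt_or_eq_of_le hxl with h | h
    · exact h
    · exfalso; rw [← h] at hneg; linarith
  have hsub3 := intermediate_value_Icc hxr hg.continuousOn
  have h03 : (0 : ℝ) ∈ Set.Icc (g x) (g 0) := ⟨le_of_lt hneg, le_of_lt h0⟩
  obtain ⟨y, ⟨hyl, hyr⟩, hyroot⟩ := hsub3 h03
  have hyT : y ∈ T := ⟨⟨le_trans (le_of_lt hmx1) (le_trans (le_of_lt hxx1) hyl), hyr⟩, hyroot⟩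
  have : y ≤ x₁ := le_csSup hTcomp.bddAbove hyT
  linarith

theorem stmt9 (a b : ℝ) (ha : a ≠ 0) (hb1 : a ^ 2 / 4 < b) (hb2 : b < 10 * a ^ 2 / 9) :
    ∃ x₁ x₂ : ℝ, Apoly a b x₁ = 0 ∧ Apoly a b x₂ = 0 ∧
      0 < |x₁| ∧ |x₁| < |x₂| ∧
      (0 < a → x₂ < x₁ ∧ x₁ < 0) ∧
      (a < 0 → 0 < x₁ ∧ x₁ < x₂) ∧
      ∀ x ∈ Set.uIcc x₁ 0, 0 ≤ Apoly a b x := by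
  rcases ha.lt_or_gt with hneg | hpos
  · -- a < 0 : apply main lemma to -a
    have h1 : (-a) ^ 2 / 4 < b := by rw [neg_pow]; simpa using hb1
    have h2 : b < 10 * (-a) ^ 2 / 9 := by rw [neg_pow]; simpa using hb2
    obtain ⟨y₁, y₂, hy1, hy2, hy21, hy10, hpos'⟩ :=
      Apoly_main (-a) b (by linarith) h1 h2
    refine ⟨-y₁, -y₂, ?_, ?_, ?_, ?_, ?_, ?_, ?_⟩
    · rw [← Apoly_neg, neg_neg]; exact hy1
    · rw [← Apoly_neg, neg_neg]; exact hy2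
    · rw [abs_pos]; intro h; rw [neg_eq_zero] at h; linarith
    · rw [abs_of_pos (by linarith), abs_of_pos (by linarith)]; linarith
    · intro h; linarith
    · intro _; constructor <;> linarith
    · intro x hx
      rw [Set.uIcc_of_ge (by linarith : (0:ℝ) ≤ -y₁)] at hx
      obtain ⟨hxl, hxr⟩ := hx
      have := hpos' (-x) ⟨by linarith, by linarith⟩
      rwa [Apoly_neg] at this
  · -- 0 < a
    obtain ⟨x₁, x₂, h1, h2, h21, h10, hpos'⟩ := Apoly_main a b hpos hb1 hb2
    refine ⟨x₁, x₂, h1, h2, ?_, ?_, ?_, ?_, ?_⟩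
    · rw [abs_pos]; linarith
    · rw [abs_of_neg h10, abs_of_neg (by linarith)]; linarith
    · intro _; exact ⟨h21, h10⟩
    · intro h; linarith
    · intro x hx
      rw [Set.uIcc_of_le (le_of_lt h10)] at hx
      exact hpos' x hx
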